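/- For the map f : ℝ³ → ℝ⁴, f(x,y,z) = cosh(z)•(xy+1, x+y/2, xy, x-y/2) - sinh(z)•(xy, x-y/2, xy+1, x+y/2), the position vector f(x,y,z) is transversal to the image of the differential df at every point: the vectors f_x, f_y, f_z, f are linearly independent in ℝ⁴ at every (x,y,z) ∈ ℝ³. -/

import Mathlib

/-- The example hypersurface, curried. -/
noncomputable def exf (x y z : ℝ) : Fin 4 → ℝ :=
  Real.cosh z • (![x * y + 1, x + y / 2, x * y, x - y / 2])
    - Real.sinh z • (![x * y, x - y / 2, x * y + 1, x + y / 2])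

theorem det_fin_four' (A : Matrix (Fin 4) (Fin 4) ℝ) :
    A.det =
      A 0 0 * (A 1 1 * (A 2 2 * A 3 3 - A 2 3 * A 3 2)
          - A 1 2 * (A 2 1 * A 3 3 - A 2 3 * A 3 1)
          + A 1 3 * (A 2 1 * A 3 2 - A 2 2 * A 3 1))
      - A 0 1 * (A 1 0 * (A 2 2 * A 3 3 - A 2 3 * A 3 2)
          - A 1 2 * (A 2 0 * A 3 3 - A 2 3 * A 3 0)
          + A 1 3 * (A 2 0 * A 3 2 - A 2 2 * A 3 0))
      + A 0 2 * (A 1 0 * (A 2 1 * A 3 3 - A 2 3 * A 3 1)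
          - A 1 1 * (A 2 0 * A 3 3 - A 2 3 * A 3 0)
          + A 1 3 * (A 2 0 * A 3 1 - A 2 1 * A 3 0))
      - A 0 3 * (A 1 0 * (A 2 1 * A 3 2 - A 2 2 * A 3 1)
          - A 1 1 * (A 2 0 * A 3 2 - A 2 2 * A 3 0)
          + A 1 2 * (A 2 0 * A 3 1 - A 2 1 * A 3 0)) := by
  rw [Matrix.det_succ_row_zero]
  simp [Fin.sum_univ_succ, Matrix.det_fin_three, Matrix.submatrix_apply, Fin.succAbove, show (Fin.succ 2 : Fin 4) = 3 from rfl, show (Fin.castSucc 2 : Fin 4) = 2 from rfl]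
  ring

/-- the partial derivatives `f_x, f_y, f_z` together with the position
vector `f` are linearly independent at every point, i.e. the position vector is
transversal to the image of the differential. -/
theorem stmt11 (x y z : ℝ) :
    LinearIndependent ℝ
      ![deriv (fun t => exf t y z) x,
        deriv (fun t => exf x t z) y,
        deriv (fun t => exf x y t) z,
        exf x y z] := by
  set c := Real.cosh z with hc
  set s := Real.sinh z with hs
  have simpset : True := trivial
  have hx : deriv (fun t => exf t y z) x =
      ![c * y - s * y, c - s, c * y - s * y, c - s] := by
    have h : HasDerivAt (fun t => exf t y z)
        (![c * y - s * y, c - s, c * y - s * y, c - s]) x := by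
      rw [hasDerivAt_pi]
      intro i
      have hty : HasDerivAt (fun t : ℝ => t * y) y x := by
        simpa using (hasDerivAt_id x).mul_const y
      fin_cases i <;> simp only [exf, Pi.sub_apply, Pi.smul_apply, smul_eq_mul,
        Matrix.cons_val_zero, Matrix.cons_val_one, Matrix.head_cons,
        Matrix.cons_val_two, Matrix.cons_val_three, Matrix.tail_cons,
        Matrix.cons_val_fin_one, Fin.isValue, ← hc, ← hs]
      · exact ((hty.add_const 1).const_mul _).sub (hty.const_mul _)
      · exact ((((hasDerivAt_id x).add_const (y/2)).const_mul c).sub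
          (((hasDerivAt_id x).sub_const (y/2)).const_mul s)).congr_deriv (by show _ = c - s; ring)
      · exact (hty.const_mul _).sub ((hty.add_const 1).const_mul _)
      · exact ((((hasDerivAt_id x).sub_const (y/2)).const_mul c).sub
          (((hasDerivAt_id x).add_const (y/2)).const_mul s)).congr_deriv (by show _ = c - s; ring)
    exact h.deriv
  have hy : deriv (fun t => exf x t z) y =
      ![c * x - s * x, c * (1/2) - s * -(1/2), c * x - s * x, c * -(1/2) - s * (1/2)] := by
    have h : HasDerivAt (fun t => exf x t z)
        (![c * x - s * x, c * (1/2) - s * -(1/2), c * x - s * x, c * -(1/2) - s * (1/2)]) y := by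
      rw [hasDerivAt_pi]
      intro i
      have hxt : HasDerivAt (fun t : ℝ => x * t) x y := by
        simpa using (hasDerivAt_id y).const_mul x
      have hhalf : HasDerivAt (fun t : ℝ => t / 2) (1 / 2 : ℝ) y := by
        simpa using (hasDerivAt_id y).div_const 2
      fin_cases i <;> simp only [exf, Pi.sub_apply, Pi.smul_apply, smul_eq_mul,
        Matrix.cons_val_zero, Matrix.cons_val_one, Matrix.head_cons,
        Matrix.cons_val_two, Matrix.cons_val_three, Matrix.tail_cons,
        Matrix.cons_val_fin_one, Fin.isValue, ← hc, ← hs]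
      · exact ((hxt.add_const 1).const_mul _).sub (hxt.const_mul _)
      · exact ((hhalf.const_add x).const_mul c).sub ((hhalf.const_sub x).const_mul s)
      · exact (hxt.const_mul _).sub ((hxt.add_const 1).const_mul _)
      · exact ((hhalf.const_sub x).const_mul c).sub ((hhalf.const_add x).const_mul s)
    exact h.deriv
  have hz : deriv (fun t => exf x y t) z =
      ![s * (x * y + 1) - c * (x * y), s * (x + y / 2) - c * (x - y / 2),
        s * (x * y) - c * (x * y + 1), s * (x - y / 2) - c * (x + y / 2)] := by
    have h : HasDerivAt (fun t => exf x y t)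
        (![s * (x * y + 1) - c * (x * y), s * (x + y / 2) - c * (x - y / 2),
          s * (x * y) - c * (x * y + 1), s * (x - y / 2) - c * (x + y / 2)]) z := by
      rw [hasDerivAt_pi]
      intro i
      fin_cases i <;> simp only [exf, Pi.sub_apply, Pi.smul_apply, smul_eq_mul,
        Matrix.cons_val_zero, Matrix.cons_val_one, Matrix.head_cons,
        Matrix.cons_val_two, Matrix.cons_val_three, Matrix.tail_cons,
        Matrix.cons_val_fin_one, Fin.isValue, ← hc, ← hs] <;>
      exact ((Real.hasDerivAt_cosh z).mul_const _).sub ((Real.hasDerivAt_sinh z).mul_const _)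
    exact h.deriv
  rw [hx, hy, hz]
  apply Matrix.linearIndependent_rows_iff_isUnit.mpr
  apply (Matrix.isUnit_iff_isUnit_det _).mpr
  apply isUnit_iff_ne_zero.mpr
  have hdet : Matrix.det (Matrix.of ![![c * y - s * y, c - s, c * y - s * y, c - s], ![c * x - s * x, c * (1/2) - s * -(1/2), c * x - s * x, c * -(1/2) - s * (1/2)], ![s * (x * y + 1) - c * (x * y), s * (x + y / 2) - c * (x - y / 2), s * (x * y) - c * (x * y + 1), s * (x - y / 2) - c * (x + y / 2)], exf x y z]) = 1 := by
    have hcs : c ^ 2 - s ^ 2 = 1 := Real.cosh_sq_sub_sinh_sq z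
    rw [det_fin_four']
    simp only [Matrix.of_apply, exf, ← hc, ← hs, Pi.sub_apply, Pi.smul_apply, smul_eq_mul,
      Matrix.cons_val_zero, Matrix.cons_val_one, Matrix.head_cons,
      Matrix.cons_val_two, Matrix.cons_val_three, Matrix.tail_cons, Matrix.cons_val_fin_one]
    linear_combination (c ^ 2 - s ^ 2 + 1) * hcs
  exact fun h => one_ne_zero (hdet.symm.trans h)
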